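/- (Deterministic stratified fragmentation, slowly varying case.) Suppose p_{n,k} = p_n for all 1 ≤ k ≤ n, where (p_n)_{n≥1} is a sequence in [0,1] with (1/n) Σ_{k=1}^n p_k → p̄ as n → ∞. Assume there exists a nondecreasing function L : [0,∞) → [0,∞) with L(n) = l_n for all n ∈ ℕ and L(tx)/L(t) → 1 as t → ∞ for every x > 0 (l_n slowly varying, c = 0). Then the empirical measures g_n converge weakly on [0,1] to p̄ δ_0 + (1 − p̄) δ_1 as n → ∞. -/

import Mathlib

open MeasureTheory Filter Set
open scoped ENNReal

lemma sum_Ioc_shift (g : ℕ → ℝ) (n : ℕ) :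
    ∑ k ∈ Finset.Ioc 0 n, g k = ∑ j ∈ Finset.range n, g (j+1) := by
  induction n with
  | zero => simp
  | succ n ih =>
    rw [Finset.sum_Ioc_succ_top (Nat.zero_le _), Finset.sum_range_succ, ih]

section frag
variable (p : ℕ → ℝ) (a : ℕ → ℕ → ℝ)

lemma frag_step
    (hp : ∀ n, p n ∈ Icc (0:ℝ) 1)
    (hrec : ∀ n k : ℕ, k ≤ n → a (n+1) (k+1) = p (n+1) * a n k + (1 - p (n+1)) * a n (k+1))
    (hanti : ∀ m n : ℕ, m ≤ n → a n 0 ≤ a m 0)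
    (hmono : ∀ m n : ℕ, m ≤ n → a m (m+1) ≤ a n (n+1))
    (ha01 : a 0 0 ≤ a 0 1) :
    ∀ n k, k ≤ n → a n k ≤ a n (k+1) := by
  intro n
  induction n with
  | zero =>
    intro k hk; interval_cases k; simpa using ha01
  | succ n ih =>
    intro k hk
    have hp1 := (hp (n+1)).1
    have hp2 := (hp (n+1)).2
    rcases k with _ | j
    · have h1 : a (n+1) 1 = p (n+1) * a n 0 + (1 - p (n+1)) * a n 1 := by
        simpa using hrec n 0 (Nat.zero_le n)
      have h2 : a n 0 ≤ a n 1 := ih 0 (Nat.zero_le n)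
      have h3 : a (n+1) 0 ≤ a n 0 := hanti n (n+1) (by omega)
      nlinarith
    · have hj : j ≤ n := by omega
      by_cases hjn : j = n
      · subst hjn
        have h1 : a (j+1) (j+1) = p (j+1) * a j j + (1 - p (j+1)) * a j (j+1) := by
          simpa using hrec j j le_rfl
        have h2 : a j j ≤ a j (j+1) := ih j le_rfl
        have h3 : a j (j+1) ≤ a (j+1) (j+2) := hmono j (j+1) (by omega)
        nlinarith
      · have h1 := hrec n j hj
        have h2 := hrec n (j+1) (by omega)
        have e1 : a n j ≤ a n (j+1) := ih j hj
        have e2 : a n (j+1) ≤ a n (j+2) := ih (j+1) (by omega)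
        rw [h1, h2]
        nlinarith

lemma frag_mono_k
    (hp : ∀ n, p n ∈ Icc (0:ℝ) 1)
    (hrec : ∀ n k : ℕ, k ≤ n → a (n+1) (k+1) = p (n+1) * a n k + (1 - p (n+1)) * a n (k+1))
    (hanti : ∀ m n : ℕ, m ≤ n → a n 0 ≤ a m 0)
    (hmono : ∀ m n : ℕ, m ≤ n → a m (m+1) ≤ a n (n+1))
    (ha01 : a 0 0 ≤ a 0 1) :
    ∀ n j k : ℕ, j ≤ k → k ≤ n + 1 → a n j ≤ a n k := by
  intro n j k hjk hk
  induction k with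
  | zero =>
    have : j = 0 := by omega
    subst this; exact le_rfl
  | succ m ihm =>
    rcases eq_or_lt_of_le hjk with rfl | h
    · exact le_rfl
    · exact (ihm (by omega) (by omega)).trans
        (frag_step p a hp hrec hanti hmono ha01 n m (by omega))

lemma frag_sum
    (hrec : ∀ n k : ℕ, k ≤ n → a (n+1) (k+1) = p (n+1) * a n k + (1 - p (n+1)) * a n (k+1)) :
    ∀ n, ∑ j ∈ Finset.range n, a n (j+1)
      = ∑ m ∈ Finset.range n, (p (m+1) * a m 0 + (1 - p (m+1)) * a m (m+1)) := by
  intro n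
  induction n with
  | zero => simp
  | succ n ih =>
    have h1 : ∑ j ∈ Finset.range (n+1), a (n+1) (j+1)
        = ∑ j ∈ Finset.range (n+1), (p (n+1) * a n j + (1 - p (n+1)) * a n (j+1)) :=
      Finset.sum_congr rfl fun j hj => hrec n j (by simpa using Nat.lt_succ_iff.mp (Finset.mem_range.mp hj))
    rw [h1, Finset.sum_add_distrib, ← Finset.mul_sum, ← Finset.mul_sum,
      Finset.sum_range_succ' (fun j => a n j) n, Finset.sum_range_succ (fun j => a n (j+1)) n,
      Finset.sum_range_succ]
    rw [← ih]
    ring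

lemma frag_barrier
    (hp : ∀ n, p n ∈ Icc (0:ℝ) 1)
    (hrec : ∀ n k : ℕ, k ≤ n → a (n+1) (k+1) = p (n+1) * a n k + (1 - p (n+1)) * a n (k+1))
    (hanti : ∀ m n : ℕ, m ≤ n → a n 0 ≤ a m 0)
    (hmono : ∀ m n : ℕ, m ≤ n → a m (m+1) ≤ a n (n+1))
    (ha01 : a 0 0 ≤ a 0 1)
    (β c : ℝ) (hβ : 0 < β) (hc0 : 0 ≤ c) (n₀ N : ℕ)
    (hc : ∀ n, n ≤ N → a n (n+1) - a n 0 ≤ c) :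
    ∀ n, n₀ ≤ n → n ≤ N → ∀ k, k ≤ n + 1 →
      a n k ≤ a n₀ 0 + c * min 1 (Real.exp (β * k) *
        ∏ m ∈ Finset.Ioc n₀ n, (p m * Real.exp (-β) + (1 - p m))) := by
  have hfac : ∀ m : ℕ, Real.exp (-β) ≤ p m * Real.exp (-β) + (1 - p m) := by
    intro m
    have h1 := (hp m).1
    have h2 := (hp m).2
    have he : Real.exp (-β) ≤ 1 := Real.exp_le_one_iff.mpr (by linarith)
    nlinarith
  have hfacpos : ∀ m : ℕ, (0:ℝ) < p m * Real.exp (-β) + (1 - p m) :=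
    fun m => lt_of_lt_of_le (Real.exp_pos _) (hfac m)
  have hprodpos : ∀ n : ℕ, (0:ℝ) < ∏ m ∈ Finset.Ioc n₀ n, (p m * Real.exp (-β) + (1 - p m)) :=
    fun n => Finset.prod_pos fun m _ => hfacpos m
  have hprodlow : ∀ n : ℕ, n₀ ≤ n →
      Real.exp (-β * ((n:ℝ) - n₀)) ≤ ∏ m ∈ Finset.Ioc n₀ n, (p m * Real.exp (-β) + (1 - p m)) := by
    intro n hn
    have h := Finset.prod_le_prod (s := Finset.Ioc n₀ n)
      (f := fun _ => Real.exp (-β)) (g := fun m => p m * Real.exp (-β) + (1 - p m))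
      (fun m _ => (Real.exp_pos _).le) (fun m _ => hfac m)
    rw [Finset.prod_const, Nat.card_Ioc] at h
    calc Real.exp (-β * ((n:ℝ) - n₀)) = Real.exp (-β) ^ (n - n₀) := by
          rw [← Real.exp_nat_mul, Nat.cast_sub hn]; ring_nf
      _ ≤ _ := h
  intro n hn
  induction n, hn using Nat.le_induction with
  | base =>
    intro hN k hk
    have hmin : min 1 (Real.exp (β * k) * ∏ m ∈ Finset.Ioc n₀ n₀, (p m * Real.exp (-β) + (1 - p m))) = 1 := by
      rw [Finset.Ioc_self, Finset.prod_empty, mul_one]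
      exact min_eq_left (Real.one_le_exp (by positivity))
    rw [hmin, mul_one]
    calc a n₀ k ≤ a n₀ (n₀ + 1) :=
          frag_mono_k p a hp hrec hanti hmono ha01 n₀ k (n₀+1) hk le_rfl
      _ ≤ a n₀ 0 + c := by have := hc n₀ hN; linarith
  | succ n hn ih =>
    intro hN k hk
    have hnN : n ≤ N := by omega
    have IH := ih hnN
    have hp1 := (hp (n+1)).1
    have hp2 := (hp (n+1)).2
    set Pn := ∏ m ∈ Finset.Ioc n₀ n, (p m * Real.exp (-β) + (1 - p m)) with hPn
    have hPsucc : ∏ m ∈ Finset.Ioc n₀ (n+1), (p m * Real.exp (-β) + (1 - p m))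
        = Pn * (p (n+1) * Real.exp (-β) + (1 - p (n+1))) := by
      rw [Finset.prod_Ioc_succ_top hn]
    rcases k with _ | j
    · have h1 : a (n+1) 0 ≤ a n₀ 0 := hanti n₀ (n+1) (by omega)
      have h2 : (0:ℝ) ≤ min 1 (Real.exp (β * ((0:ℕ):ℝ)) * ∏ m ∈ Finset.Ioc n₀ (n+1), (p m * Real.exp (-β) + (1 - p m))) :=
        le_min zero_le_one (mul_nonneg (Real.exp_pos _).le (hprodpos _).le)
      have h3 : 0 ≤ c * min 1 (Real.exp (β * ((0:ℕ):ℝ)) * ∏ m ∈ Finset.Ioc n₀ (n+1), (p m * Real.exp (-β) + (1 - p m))) :=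
        mul_nonneg hc0 h2
      linarith
    · by_cases hjn : j = n + 1
      · subst hjn
        have hbig : (1:ℝ) ≤ Real.exp (β * (((n+1)+1 : ℕ):ℝ)) * ∏ m ∈ Finset.Ioc n₀ (n+1), (p m * Real.exp (-β) + (1 - p m)) := by
          have hlow := hprodlow (n+1) (by omega)
          have h1 : Real.exp (β * (((n+1)+1 : ℕ):ℝ)) * Real.exp (-β * ((((n+1):ℕ):ℝ) - (n₀:ℝ)))
              ≤ Real.exp (β * (((n+1)+1 : ℕ):ℝ)) * ∏ m ∈ Finset.Ioc n₀ (n+1), (p m * Real.exp (-β) + (1 - p m)) :=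
            mul_le_mul_of_nonneg_left hlow (Real.exp_pos _).le
          refine le_trans ?_ h1
          rw [← Real.exp_add]
          apply Real.one_le_exp
          push_cast
          have hn₀ : (0:ℝ) ≤ (n₀:ℝ) := Nat.cast_nonneg _
          nlinarith [mul_nonneg hβ.le hn₀]
        rw [min_eq_left hbig]
        have h1 : a (n+1) ((n+1)+1) ≤ a (n+1) 0 + c := by
          have := hc (n+1) hN; linarith
        have h2 : a (n+1) 0 ≤ a n₀ 0 := hanti n₀ (n+1) (by omega)
        linarith
      · have hj : j ≤ n := by omega
        have hrecn := hrec n j hj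
        have B1 := IH j (by omega)
        have B2 := IH (j+1) (by omega)
        rw [hrecn, hPsucc]
        have hkey : Real.exp (β * ((j+1:ℕ):ℝ)) * (Pn * (p (n+1) * Real.exp (-β) + (1 - p (n+1))))
            = p (n+1) * (Real.exp (β * (j:ℝ)) * Pn) + (1 - p (n+1)) * (Real.exp (β * ((j+1:ℕ):ℝ)) * Pn) := by
          push_cast
          rw [show Real.exp (β*((j:ℝ)+1)) = Real.exp (β * (j:ℝ)) * Real.exp β from by
            rw [← Real.exp_add]; ring_nf]
          rw [Real.exp_neg]
          field_simp
        rw [hkey]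
        have hmin : p (n+1) * min 1 (Real.exp (β * (j:ℝ)) * Pn) + (1 - p (n+1)) * min 1 (Real.exp (β * ((j+1:ℕ):ℝ)) * Pn)
            ≤ min 1 (p (n+1) * (Real.exp (β * (j:ℝ)) * Pn) + (1 - p (n+1)) * (Real.exp (β * ((j+1:ℕ):ℝ)) * Pn)) := by
          apply le_min
          · nlinarith [min_le_left (1:ℝ) (Real.exp (β * (j:ℝ)) * Pn),
              min_le_left (1:ℝ) (Real.exp (β * ((j+1:ℕ):ℝ)) * Pn)]
          · nlinarith [min_le_right (1:ℝ) (Real.exp (β * (j:ℝ)) * Pn),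
              min_le_right (1:ℝ) (Real.exp (β * ((j+1:ℕ):ℝ)) * Pn)]
        have t1 : p (n+1) * a n j ≤ p (n+1) * (a n₀ 0 + c * min 1 (Real.exp (β * (j:ℝ)) * Pn)) :=
          mul_le_mul_of_nonneg_left B1 hp1
        have t2 : (1 - p (n+1)) * a n (j+1) ≤ (1 - p (n+1)) * (a n₀ 0 + c * min 1 (Real.exp (β * ((j+1:ℕ):ℝ)) * Pn)) :=
          mul_le_mul_of_nonneg_left B2 (by linarith)
        have t3 : c * (p (n+1) * min 1 (Real.exp (β * (j:ℝ)) * Pn) + (1 - p (n+1)) * min 1 (Real.exp (β * ((j+1:ℕ):ℝ)) * Pn))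
            ≤ c * min 1 (p (n+1) * (Real.exp (β * (j:ℝ)) * Pn) + (1 - p (n+1)) * (Real.exp (β * ((j+1:ℕ):ℝ)) * Pn)) :=
          mul_le_mul_of_nonneg_left hmin hc0
        nlinarith [t1, t2, t3]
end frag

lemma slow_l (l : ℕ → ℝ) (L : ℝ → ℝ)
    (hL_mono : MonotoneOn L (Ici (0:ℝ)))
    (hL_interp : ∀ n : ℕ, L n = l n)
    (hL_slow : ∀ x : ℝ, 0 < x → Tendsto (fun t : ℝ => L (t * x) / L t) atTop (nhds 1))
    (hl_pos : ∀ n, 0 < l n) (hl_mono : Monotone l)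
    (θ : ℝ) (hθ0 : 0 < θ) (hθ1 : θ ≤ 1) :
    Tendsto (fun n : ℕ => l (⌈θ * (n:ℝ)⌉₊) / l n) atTop (nhds 1) := by
  have hbase : Tendsto (fun n : ℕ => L ((n:ℝ) * θ) / L n) atTop (nhds 1) :=
    (hL_slow θ hθ0).comp tendsto_natCast_atTop_atTop
  apply tendsto_of_tendsto_of_tendsto_of_le_of_le' hbase tendsto_const_nhds
  · filter_upwards with n
    have hln := hl_pos n
    have h : L ((n:ℝ) * θ) ≤ l (⌈θ * (n:ℝ)⌉₊) := by
      rw [← hL_interp]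
      apply hL_mono (mem_Ici.mpr (by positivity)) (mem_Ici.mpr (Nat.cast_nonneg _))
      calc (n:ℝ) * θ = θ * n := mul_comm _ _
        _ ≤ (⌈θ * (n:ℝ)⌉₊ : ℝ) := Nat.le_ceil _
    rw [hL_interp n]
    gcongr
  · filter_upwards with n
    have h1 : l (⌈θ * (n:ℝ)⌉₊) ≤ l n := by
      apply hl_mono
      exact Nat.ceil_le.mpr (by nlinarith [Nat.cast_nonneg (α := ℝ) n])
    exact div_le_one_of_le₀ h1 (hl_pos n).le

lemma eps_to_zero (l : ℕ → ℝ) (L : ℝ → ℝ)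
    (hL_mono : MonotoneOn L (Ici (0:ℝ)))
    (hL_interp : ∀ n : ℕ, L n = l n)
    (hL_slow : ∀ x : ℝ, 0 < x → Tendsto (fun t : ℝ => L (t * x) / L t) atTop (nhds 1))
    (hl_pos : ∀ n, 0 < l n) (hl_mono : Monotone l) :
    Tendsto (fun n : ℕ => (∑ m ∈ Finset.range n, (1 - l m / l n)) / n) atTop (nhds 0) := by
  rw [Metric.tendsto_atTop]
  intro δ hδ
  set θ : ℝ := min (δ/3) 1 with hθ
  have hθ0 : 0 < θ := lt_min (by linarith) one_pos
  have hθ1 : θ ≤ 1 := min_le_right _ _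
  have hslow := slow_l l L hL_mono hL_interp hL_slow hl_pos hl_mono θ hθ0 hθ1
  rw [Metric.tendsto_atTop] at hslow
  obtain ⟨N₁, hN₁⟩ := hslow (δ/3) (by linarith)
  obtain ⟨N₂, hN₂⟩ := exists_nat_gt (3/δ)
  refine ⟨max N₁ (N₂ + 1), fun n hn => ?_⟩
  have hnN₁ : N₁ ≤ n := le_trans (le_max_left _ _) hn
  have hnN₂ : (3/δ : ℝ) < n := lt_of_lt_of_le hN₂ (by exact_mod_cast le_trans (by omega) hn)
  have hn1 : 1 ≤ n := by
    rcases Nat.eq_zero_or_pos n with rfl | h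
    · exfalso; simp at hnN₂
      have : (0:ℝ) < 3/δ := by positivity
      linarith
    · exact h
  have hnR : (0:ℝ) < n := by exact_mod_cast hn1
  set m₀ : ℕ := ⌈θ * (n:ℝ)⌉₊ with hm₀
  have hm₀n : m₀ ≤ n := Nat.ceil_le.mpr (by nlinarith)
  -- termwise facts
  have hterm01 : ∀ m, m ≤ n → 0 ≤ 1 - l m / l n ∧ 1 - l m / l n ≤ 1 := by
    intro m hm
    constructor
    · have : l m / l n ≤ 1 := div_le_one_of_le₀ (hl_mono hm) (hl_pos n).le
      linarith
    · have : 0 ≤ l m / l n := div_nonneg (hl_pos m).le (hl_pos n).le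
      linarith
  have htail : ∀ m, m₀ ≤ m → 1 - l m / l n ≤ δ/3 := by
    intro m hm
    have h1 : l m₀ ≤ l m := hl_mono hm
    have h2 : dist (l m₀ / l n) 1 < δ/3 := hN₁ n hnN₁
    rw [Real.dist_eq, abs_lt] at h2
    have : l m₀ / l n ≤ l m / l n := by gcongr; exact (hl_pos n).le
    linarith
  -- split the sum
  have hsplit : ∑ m ∈ Finset.range n, (1 - l m / l n)
      = ∑ m ∈ Finset.Ico 0 m₀, (1 - l m / l n) + ∑ m ∈ Finset.Ico m₀ n, (1 - l m / l n) := by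
    rw [Finset.sum_Ico_consecutive _ (Nat.zero_le _) hm₀n, Finset.range_eq_Ico]
  have hb1 : ∑ m ∈ Finset.Ico 0 m₀, (1 - l m / l n) ≤ m₀ := by
    calc ∑ m ∈ Finset.Ico 0 m₀, (1 - l m / l n) ≤ ∑ m ∈ Finset.Ico 0 m₀, 1 := by
          apply Finset.sum_le_sum
          intro m hm
          exact (hterm01 m (le_trans (le_of_lt (Finset.mem_Ico.mp hm).2) hm₀n)).2
      _ = m₀ := by simp
  have hb2 : ∑ m ∈ Finset.Ico m₀ n, (1 - l m / l n) ≤ (n : ℝ) * (δ/3) := by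
    calc ∑ m ∈ Finset.Ico m₀ n, (1 - l m / l n) ≤ ∑ m ∈ Finset.Ico m₀ n, (δ/3) := by
          apply Finset.sum_le_sum
          intro m hm
          exact htail m (Finset.mem_Ico.mp hm).1
      _ = ((n - m₀ : ℕ) : ℝ) * (δ/3) := by rw [Finset.sum_const, Nat.card_Ico]; simp [mul_comm]
      _ ≤ (n : ℝ) * (δ/3) := by
          have : ((n - m₀ : ℕ):ℝ) ≤ (n:ℝ) := by exact_mod_cast Nat.sub_le n m₀
          nlinarith
  have hm₀le : (m₀ : ℝ) ≤ θ * n + 1 := le_of_lt (Nat.ceil_lt_add_one (by positivity))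
  have hsum_nonneg : 0 ≤ ∑ m ∈ Finset.range n, (1 - l m / l n) :=
    Finset.sum_nonneg fun m hm => (hterm01 m (le_of_lt (Finset.mem_range.mp hm))).1
  rw [Real.dist_eq, sub_zero, abs_of_nonneg (div_nonneg hsum_nonneg hnR.le)]
  rw [div_lt_iff₀ hnR]
  have hθδ : θ ≤ δ/3 := min_le_left _ _
  have h3 : (1:ℝ) < n * (δ/3) := by
    rw [div_lt_iff₀ hδ] at hnN₂
    nlinarith
  calc ∑ m ∈ Finset.range n, (1 - l m / l n) ≤ (m₀ : ℝ) + n * (δ/3) := by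
        rw [hsplit]; linarith
    _ ≤ θ * n + 1 + n * (δ/3) := by linarith
    _ < δ * n := by nlinarith

lemma frag_mean_abstract (S lsum : ℕ → ℝ) (q : ℕ → ℝ) (l : ℕ → ℝ) (pbar : ℝ)
    (hl_pos : ∀ n, 0 < l n)
    (hkey : ∀ n, |S n - (∑ m ∈ Finset.range n, (1 - q m)) * l n| ≤ ∑ m ∈ Finset.range n, (l n - l m))
    (heps : Tendsto (fun n : ℕ => (∑ m ∈ Finset.range n, (1 - l m / l n)) / n) atTop (nhds 0))
    (hces : Tendsto (fun n : ℕ => (∑ m ∈ Finset.range n, q m) / n) atTop (nhds pbar)) :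
    Tendsto (fun n : ℕ => S n / ((n:ℝ) * l n)) atTop (nhds (1 - pbar)) := by
  have hmain : ∀ n : ℕ, 1 ≤ n →
      |S n / ((n:ℝ) * l n) - (1 - (∑ m ∈ Finset.range n, q m) / n)|
        ≤ (∑ m ∈ Finset.range n, (1 - l m / l n)) / n := by
    intro n hn
    have hnR : (0:ℝ) < n := by exact_mod_cast hn
    have hln := hl_pos n
    have e1 : (1 : ℝ) - (∑ m ∈ Finset.range n, q m) / n
        = (∑ m ∈ Finset.range n, (1 - q m)) / n := by
      rw [Finset.sum_sub_distrib, Finset.sum_const, Finset.card_range, nsmul_eq_mul, mul_one]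
      field_simp
    have e2 : ∑ m ∈ Finset.range n, (l n - l m) = l n * ∑ m ∈ Finset.range n, (1 - l m / l n) := by
      rw [Finset.mul_sum]
      apply Finset.sum_congr rfl
      intro m hm
      field_simp
    have e3 : S n / ((n:ℝ) * l n) - (∑ m ∈ Finset.range n, (1 - q m)) / n
        = (S n - (∑ m ∈ Finset.range n, (1 - q m)) * l n) / ((n:ℝ) * l n) := by
      field_simp
    set E := ∑ m ∈ Finset.range n, (1 - l m / l n) with hE
    rw [e1, e3, abs_div, abs_of_pos (mul_pos hnR hln)]
    rw [div_le_div_iff₀ (mul_pos hnR hln) hnR]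
    calc |S n - (∑ m ∈ Finset.range n, (1 - q m)) * l n| * n
        ≤ (∑ m ∈ Finset.range n, (l n - l m)) * n :=
          mul_le_mul_of_nonneg_right (hkey n) hnR.le
      _ = E * (↑n * l n) := by
          rw [e2]; ring
  have h2 : Tendsto (fun n : ℕ => S n / ((n:ℝ) * l n) - (1 - (∑ m ∈ Finset.range n, q m) / n))
      atTop (nhds 0) := by
    apply squeeze_zero_norm' ?_ heps
    filter_upwards [eventually_ge_atTop 1] with n hn
    exact hmain n hn
  have h3 : Tendsto (fun n : ℕ => (1 - (∑ m ∈ Finset.range n, q m) / n)) atTop (nhds (1 - pbar)) :=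
    tendsto_const_nhds.sub hces
  have := h2.add h3
  simp only [sub_add_cancel, zero_add] at this
  exact this

lemma frag_prod_le (p : ℕ → ℝ) (hp : ∀ n, p n ∈ Icc (0:ℝ) 1) (β : ℝ) (s : Finset ℕ) :
    ∏ m ∈ s, (p m * Real.exp (-β) + (1 - p m))
      ≤ Real.exp (-((1 - Real.exp (-β)) * ∑ m ∈ s, p m)) := by
  have hterm : ∀ m ∈ s, p m * Real.exp (-β) + (1 - p m)
      ≤ Real.exp (-((1 - Real.exp (-β)) * p m)) := by
    intro m _
    have h := Real.add_one_le_exp (-((1 - Real.exp (-β)) * p m))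
    have e : p m * Real.exp (-β) + (1 - p m) = -((1 - Real.exp (-β)) * p m) + 1 := by ring
    rw [e]; exact h
  calc ∏ m ∈ s, (p m * Real.exp (-β) + (1 - p m))
      ≤ ∏ m ∈ s, Real.exp (-((1 - Real.exp (-β)) * p m)) := by
        apply Finset.prod_le_prod ?_ hterm
        intro m _
        have h1 := (hp m).1
        have h2 := (hp m).2
        nlinarith [Real.exp_pos (-β)]
    _ = Real.exp (∑ m ∈ s, -((1 - Real.exp (-β)) * p m)) := (Real.exp_sum _ _).symm
    _ = Real.exp (-((1 - Real.exp (-β)) * ∑ m ∈ s, p m)) := by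
        congr 1
        rw [Finset.mul_sum, ← Finset.sum_neg_distrib]
set_option maxHeartbeats 1000000


lemma frag_sum_bound (p : ℕ → ℝ) (a : ℕ → ℕ → ℝ)
    (hp : ∀ n, p n ∈ Icc (0:ℝ) 1)
    (hrec : ∀ n k : ℕ, k ≤ n → a (n+1) (k+1) = p (n+1) * a n k + (1 - p (n+1)) * a n (k+1))
    (hanti : ∀ m n : ℕ, m ≤ n → a n 0 ≤ a m 0)
    (hmono : ∀ m n : ℕ, m ≤ n → a m (m+1) ≤ a n (n+1))
    (hsum : ∀ n, ∑ j ∈ Finset.range n, a n (j+1)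
      = ∑ m ∈ Finset.range n, (p (m+1) * a m 0 + (1 - p (m+1)) * a m (m+1)))
    (l : ℕ → ℝ) (hl : ∀ n, l n = a n (n+1) - a n 0) :
    ∀ n : ℕ, |(∑ j ∈ Finset.range n, (a n (j+1) - a n 0))
        - (∑ m ∈ Finset.range n, (1 - p (m+1))) * l n| ≤ ∑ m ∈ Finset.range n, (l n - l m) := by
  intro n
  have hconst : ∑ _m ∈ Finset.range n, a n 0 = n * a n 0 := by
    rw [Finset.sum_const, Finset.card_range, nsmul_eq_mul]
  have h1 : (∑ j ∈ Finset.range n, (a n (j+1) - a n 0))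
      - (∑ m ∈ Finset.range n, (1 - p (m+1))) * l n
      = ∑ m ∈ Finset.range n, (p (m+1) * a m 0 + (1 - p (m+1)) * a m (m+1)
          - a n 0 - (1 - p (m+1)) * l n) := by
    simp only [Finset.sum_sub_distrib]
    rw [hsum, hconst, sub_mul, Finset.sum_mul, Finset.sum_mul]
    rw [← Finset.sum_sub_distrib]
    congr 1
    apply Finset.sum_congr rfl
    intro x hx
    ring
  rw [h1]
  refine le_trans (Finset.abs_sum_le_sum_abs _ _) (Finset.sum_le_sum ?_)
  intro m hm
  have hmn : m ≤ n := le_of_lt (Finset.mem_range.mp hm)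
  have hd : a n 0 ≤ a m 0 := hanti m n hmn
  have hu : a m (m+1) ≤ a n (n+1) := hmono m n hmn
  have hlm := hl m
  have hln := hl n
  have hp1 := (hp (m+1)).1
  have hp2 := (hp (m+1)).2
  rw [abs_le]
  constructor
  · nlinarith
  · nlinarith


lemma frag_tail (p : ℕ → ℝ) (a : ℕ → ℕ → ℝ)
    (hp : ∀ n, p n ∈ Icc (0:ℝ) 1)
    (hrec : ∀ n k : ℕ, k ≤ n → a (n+1) (k+1) = p (n+1) * a n k + (1 - p (n+1)) * a n (k+1))
    (hanti : ∀ m n : ℕ, m ≤ n → a n 0 ≤ a m 0)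
    (hmono : ∀ m n : ℕ, m ≤ n → a m (m+1) ≤ a n (n+1))
    (ha01 : a 0 0 ≤ a 0 1)
    (hbar : ∀ (β c : ℝ), 0 < β → 0 ≤ c → ∀ (n₀ N : ℕ),
      (∀ n, n ≤ N → a n (n+1) - a n 0 ≤ c) →
      ∀ n, n₀ ≤ n → n ≤ N → ∀ k, k ≤ n + 1 →
      a n k ≤ a n₀ 0 + c * min 1 (Real.exp (β * k) *
        ∏ m ∈ Finset.Ioc n₀ n, (p m * Real.exp (-β) + (1 - p m))))
    (hprodle : ∀ (β : ℝ) (s : Finset ℕ),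
      ∏ m ∈ s, (p m * Real.exp (-β) + (1 - p m))
        ≤ Real.exp (-((1 - Real.exp (-β)) * ∑ m ∈ s, p m)))
    (l : ℕ → ℝ) (hl : ∀ n, l n = a n (n+1) - a n 0)
    (hl_pos : ∀ n, 0 < l n) (hl_mono : Monotone l)
    (pbar : ℝ) (hpbar1 : pbar ≤ 1)
    (hces : Tendsto (fun n : ℕ => (∑ m ∈ Finset.Ioc 0 n, p m) / n) atTop (nhds pbar))
    (hslow : ∀ θ : ℝ, 0 < θ → θ ≤ 1 →
      Tendsto (fun n : ℕ => l (⌈θ * (n:ℝ)⌉₊) / l n) atTop (nhds 1))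
    (α : ℕ → ℕ → ℝ) (hα : ∀ n k, α n k = (a n k - a n 0) / l n)
    (ε : ℝ) (hε0 : 0 < ε) (hεhalf : ε ≤ 1/2) :
    Tendsto (fun n : ℕ => α n (⌊(pbar - ε) * (n:ℝ)⌋₊)) atTop (nhds 0) := by
  by_cases hpe : pbar ≤ ε
  · have hz : ∀ n : ℕ, α n (⌊(pbar - ε) * (n:ℝ)⌋₊) = 0 := by
      intro n
      have h0 : (pbar - ε) * (n:ℝ) ≤ 0 :=
        mul_nonpos_of_nonpos_of_nonneg (by linarith) (Nat.cast_nonneg _)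
      rw [Nat.floor_of_nonpos h0, hα]
      simp
    simpa [hz] using (tendsto_const_nhds : Tendsto (fun _ : ℕ => (0:ℝ)) atTop (nhds 0))
  · push_neg at hpe
    set θ : ℝ := ε/4 with hθ
    set β : ℝ := ε/8 with hβdef
    have hβ : 0 < β := by positivity
    set cβ : ℝ := 1 - Real.exp (-β) with hcβdef
    have hEE : Real.exp β * Real.exp (-β) = 1 := by rw [← Real.exp_add]; simp
    have hcβ_le : cβ ≤ β := by
      have := Real.add_one_le_exp (-β)
      rw [hcβdef]; linarith
    have hcβ_ge : β * (1 - β) ≤ cβ := by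
      have h1 := Real.add_one_le_exp β
      have h2 := (Real.exp_pos (-β)).le
      rw [hcβdef]
      nlinarith
    have hcβpos : 0 < cβ := by nlinarith
    set γ : ℝ := 3*β*ε/8 with hγdef
    have hγpos : 0 < γ := by positivity
    set K : ℕ → ℕ := fun n => ⌊(pbar - ε) * (n:ℝ)⌋₊ with hK
    set n₀ : ℕ → ℕ := fun n => ⌈θ * (n:ℝ)⌉₊ with hn₀
    set Q : ℕ → ℝ := fun n => ∑ m ∈ Finset.Ioc (n₀ n) n, p m with hQ
    have hn₀le : ∀ n : ℕ, n₀ n ≤ n := by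
      intro n
      apply Nat.ceil_le.mpr
      have : (0:ℝ) ≤ n := Nat.cast_nonneg _
      nlinarith
    have hKle : ∀ n : ℕ, K n ≤ n := by
      intro n
      have h1 : (pbar - ε) * (n:ℝ) ≤ (n:ℝ) := by
        have : (0:ℝ) ≤ n := Nat.cast_nonneg _
        nlinarith
      calc K n ≤ ⌊(n:ℝ)⌋₊ := Nat.floor_le_floor h1
        _ = n := Nat.floor_natCast n
    -- Step A : pointwise bound
    have hA : ∀ n : ℕ, α n (K n) ≤ (1 - l (n₀ n) / l n) + Real.exp (β * K n - cβ * Q n) := by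
      intro n
      have hb := hbar β (l n) hβ (hl_pos n).le (n₀ n) n
        (fun m hm => by rw [← hl m]; exact hl_mono hm)
        n (hn₀le n) le_rfl (K n) (le_trans (hKle n) (by omega))
      have hmin_le : min 1 (Real.exp (β * K n) *
          ∏ m ∈ Finset.Ioc (n₀ n) n, (p m * Real.exp (-β) + (1 - p m)))
          ≤ Real.exp (β * K n) * ∏ m ∈ Finset.Ioc (n₀ n) n, (p m * Real.exp (-β) + (1 - p m)) :=
        min_le_right _ _
      have hexp : Real.exp (β * K n) * ∏ m ∈ Finset.Ioc (n₀ n) n, (p m * Real.exp (-β) + (1 - p m))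
          ≤ Real.exp (β * K n - cβ * Q n) := by
        calc Real.exp (β * K n) * ∏ m ∈ Finset.Ioc (n₀ n) n, (p m * Real.exp (-β) + (1 - p m))
            ≤ Real.exp (β * K n) * Real.exp (-((1 - Real.exp (-β)) * Q n)) :=
              mul_le_mul_of_nonneg_left (hprodle β _) (Real.exp_pos _).le
          _ = Real.exp (β * K n - cβ * Q n) := by rw [← Real.exp_add]; congr 1
      have hdrop : a (n₀ n) 0 - a n 0 ≤ l n - l (n₀ n) := by
        have h1 := hl n
        have h2 := hl (n₀ n)
        have h3 : a (n₀ n) (n₀ n + 1) ≤ a n (n+1) := hmono (n₀ n) n (hn₀le n)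
        linarith
      have hln := hl_pos n
      rw [hα]
      rw [div_le_iff₀ hln]
      have hstep : a n (K n) - a n 0 ≤ (a (n₀ n) 0 - a n 0) + l n * Real.exp (β * K n - cβ * Q n) := by
        have := le_trans hb (by nlinarith [le_trans hmin_le hexp] :
          a (n₀ n) 0 + l n * min 1 (Real.exp (β * K n) *
            ∏ m ∈ Finset.Ioc (n₀ n) n, (p m * Real.exp (-β) + (1 - p m)))
          ≤ a (n₀ n) 0 + l n * Real.exp (β * K n - cβ * Q n))
        linarith
      have hfrac : (a (n₀ n) 0 - a n 0) ≤ (1 - l (n₀ n) / l n) * l n := by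
        have : (1 - l (n₀ n) / l n) * l n = l n - l (n₀ n) := by field_simp
        linarith [hdrop]
      nlinarith [hstep, hfrac]
    -- Step B : first piece tends to 0
    have hB : Tendsto (fun n : ℕ => 1 - l (n₀ n) / l n) atTop (nhds 0) := by
      have := (tendsto_const_nhds (x := (1:ℝ)) (f := atTop (α := ℕ))).sub
        (hslow θ (by positivity) (by rw [hθ]; linarith))
      simpa using this
    -- Step C : exponential piece tends to 0
    have hC : Tendsto (fun n : ℕ => Real.exp (β * K n - cβ * Q n)) atTop (nhds 0) := by
      have hev : ∀ᶠ n : ℕ in atTop, β * K n - cβ * Q n ≤ -γ * n + cβ := by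
        have hces2 : ∀ᶠ n : ℕ in atTop, |(∑ m ∈ Finset.Ioc 0 n, p m) / n - pbar| ≤ ε/4 := by
          have := Metric.tendsto_atTop.mp hces (ε/4) (by positivity)
          obtain ⟨N, hN⟩ := this
          filter_upwards [eventually_ge_atTop N] with n hn
          exact (le_of_lt (by simpa [Real.dist_eq] using hN n hn))
        filter_upwards [hces2, eventually_ge_atTop 1] with n hces3 hn1
        have hnR : (0:ℝ) < n := by exact_mod_cast hn1
        set P : ℕ → ℝ := fun j => ∑ m ∈ Finset.Ioc 0 j, p m with hP
        have hPn : (pbar - ε/4) * n ≤ P n := by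
          have h := abs_le.mp hces3
          have h' : pbar - ε/4 ≤ P n / n := by linarith [h.1]
          exact (le_div_iff₀ hnR).mp h'
        have hQeq : Q n = P n - P (n₀ n) := by
          rw [hQ, hP]
          have := Finset.sum_Ioc_consecutive p (Nat.zero_le (n₀ n)) (hn₀le n)
          simp only []
          linarith [this]
        have hPn₀ : P (n₀ n) ≤ θ * n + 1 := by
          have h1 : P (n₀ n) ≤ (n₀ n : ℝ) := by
            calc P (n₀ n) ≤ ∑ m ∈ Finset.Ioc 0 (n₀ n), 1 :=
                  Finset.sum_le_sum (fun m _ => (hp m).2)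
              _ = (n₀ n : ℝ) := by simp
          have h2 : (n₀ n : ℝ) ≤ θ * n + 1 := le_of_lt (Nat.ceil_lt_add_one (by positivity))
          linarith
        have hKreal : (K n : ℝ) ≤ (pbar - ε) * n :=
          Nat.floor_le (by nlinarith)
        have hQlow : (pbar - ε/4 - θ) * n - 1 ≤ Q n := by
          rw [hQeq]; linarith
        have hrate : β * (pbar - ε) - cβ * (pbar - ε/2) ≤ -γ := by
          have h1 : cβ * (pbar - ε/2) ≥ β * (1-β) * (pbar - ε/2) := by
            apply mul_le_mul_of_nonneg_right hcβ_ge (by linarith)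
          have h2 : β * (1-β) * (pbar - ε/2) ≥ β * (pbar - ε/2) - β * β := by nlinarith
          rw [hγdef, hβdef]
          nlinarith
        have hQup : Q n ≤ (n:ℝ) := by
          calc Q n ≤ ∑ m ∈ Finset.Ioc (n₀ n) n, 1 := Finset.sum_le_sum (fun m _ => (hp m).2)
            _ = ((n - n₀ n : ℕ) : ℝ) := by simp
            _ ≤ (n:ℝ) := by exact_mod_cast Nat.sub_le n (n₀ n)
        calc β * K n - cβ * Q n ≤ β * ((pbar - ε)*n) - cβ * ((pbar - ε/4 - θ)*n - 1) := by
              have t1 : β * (K n : ℝ) ≤ β * ((pbar - ε)*n) := mul_le_mul_of_nonneg_left hKreal hβ.le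
              have t2 : cβ * ((pbar - ε/4 - θ)*n - 1) ≤ cβ * Q n :=
                mul_le_mul_of_nonneg_left hQlow hcβpos.le
              linarith
          _ = (β * (pbar - ε) - cβ * (pbar - ε/4 - θ)) * n + cβ := by ring
          _ ≤ -γ * n + cβ := by
              have : pbar - ε/4 - θ = pbar - ε/2 := by rw [hθ]; ring
              rw [this]
              nlinarith [hrate, hnR]
      have hgeo : Tendsto (fun n : ℕ => Real.exp cβ * Real.exp (-γ) ^ n) atTop (nhds 0) := by
        have := tendsto_pow_atTop_nhds_zero_of_lt_one (Real.exp_pos (-γ)).le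
          (Real.exp_lt_one_iff.mpr (by linarith))
        simpa using this.const_mul (Real.exp cβ)
      apply squeeze_zero' (Eventually.of_forall fun n => (Real.exp_pos _).le) ?_ hgeo
      filter_upwards [hev] with n hn
      calc Real.exp (β * K n - cβ * Q n) ≤ Real.exp (-γ * n + cβ) := Real.exp_le_exp.mpr hn
        _ = Real.exp cβ * Real.exp (-γ) ^ n := by
            rw [← Real.exp_nat_mul, ← Real.exp_add]; congr 1; ring
    -- combine
    have hsum := hB.add hC
    rw [add_zero] at hsum
    apply squeeze_zero' ?_ (Eventually.of_forall hA) hsum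
    filter_upwards with n
    rw [hα]
    apply div_nonneg ?_ (hl_pos n).le
    have hmk := frag_mono_k p a hp hrec hanti hmono ha01 n 0 (K n) (Nat.zero_le _)
      (le_trans (hKle n) (by omega))
    linarith
/-- The empirical measure `g_n = (1/n) Σ_{k=1}^n δ_{α_{n,k}}` of the normalized break
points `α_{n,k} = (a_{n,k} - a_{n,0})/l_n`. -/
noncomputable def empiricalMeasure (α : ℕ → ℕ → ℝ) (n : ℕ) : Measure ℝ :=
  ((n : ℝ≥0∞))⁻¹ • ∑ k ∈ Finset.Icc 1 n, Measure.dirac (α n k)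

/-- **Deterministic stratified fragmentation, slowly varying case.** If `p_{n,k} = p_n`
with Cesàro mean `p̄` and the interval lengths `l_n` are slowly varying, then the empirical
measures of the normalized break points converge weakly to `p̄ δ_0 + (1-p̄) δ_1`. -/
theorem deterministic_stratified_slowly_varying
    (p : ℕ → ℝ) (hp : ∀ n, p n ∈ Icc (0:ℝ) 1)
    (a : ℕ → ℕ → ℝ)
    (ha_anti : Antitone fun n => a n 0)
    (ha_mono : Monotone fun n => a n (n + 1))
    (ha_pos : a 0 0 < a 0 1)
    (harec : ∀ n : ℕ, 1 ≤ n → ∀ k : ℕ, 1 ≤ k → k ≤ n →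
      a n k = p n * a (n - 1) (k - 1) + (1 - p n) * a (n - 1) k)
    (l : ℕ → ℝ) (hl : ∀ n, l n = a n (n + 1) - a n 0)
    (pbar : ℝ)
    (hcesaro : Tendsto (fun n : ℕ => (∑ k ∈ Finset.Icc 1 n, p k) / n) atTop (nhds pbar))
    (L : ℝ → ℝ) (hL_nonneg : ∀ x : ℝ, 0 ≤ x → 0 ≤ L x)
    (hL_mono : MonotoneOn L (Ici (0:ℝ)))
    (hL_interp : ∀ n : ℕ, L n = l n)
    (hL_slow : ∀ x : ℝ, 0 < x →
      Tendsto (fun t : ℝ => L (t * x) / L t) atTop (nhds 1))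
    (α : ℕ → ℕ → ℝ) (hα : ∀ n k, α n k = (a n k - a n 0) / l n) :
    ∀ f : BoundedContinuousFunction ℝ ℝ,
      Tendsto (fun n : ℕ => ∫ x, f x ∂(empiricalMeasure α n)) atTop
        (nhds (∫ x, f x ∂(ENNReal.ofReal pbar • Measure.dirac (0:ℝ) +
          ENNReal.ofReal (1 - pbar) • Measure.dirac (1:ℝ)))) := by
  intro f
  -- basic structure
  have hrec' : ∀ n k : ℕ, k ≤ n → a (n+1) (k+1) = p (n+1) * a n k + (1 - p (n+1)) * a n (k+1) := by
    intro n k hk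
    have := harec (n+1) (by omega) (k+1) (by omega) (by omega)
    simpa using this
  have hanti' : ∀ m n : ℕ, m ≤ n → a n 0 ≤ a m 0 := fun m n h => ha_anti h
  have hmono' : ∀ m n : ℕ, m ≤ n → a m (m+1) ≤ a n (n+1) := fun m n h => ha_mono h
  have ha01 : a 0 0 ≤ a 0 1 := ha_pos.le
  have hl_pos : ∀ n, 0 < l n := by
    intro n; rw [hl n]
    have h1 : a n 0 ≤ a 0 0 := hanti' 0 n (Nat.zero_le n)
    have h2 : a 0 1 ≤ a n (n+1) := by
      have := hmono' 0 n (Nat.zero_le n); simpa using this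
    linarith
  have hl_mono : Monotone l := by
    intro m n h; rw [hl m, hl n]
    have h1 := hanti' m n h
    have h2 := hmono' m n h
    linarith
  have hmonok := frag_mono_k p a hp hrec' hanti' hmono' ha01
  have hα0 : ∀ n k : ℕ, k ≤ n + 1 → 0 ≤ α n k := by
    intro n k hk
    rw [hα]
    exact div_nonneg (by linarith [hmonok n 0 k (Nat.zero_le _) hk]) (hl_pos n).le
  have hα1 : ∀ n k : ℕ, k ≤ n + 1 → α n k ≤ 1 := by
    intro n k hk
    rw [hα, div_le_one (hl_pos n)]
    have := hmonok n k (n+1) hk le_rfl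
    have hln := hl n
    linarith
  have hαmono : ∀ n j k : ℕ, j ≤ k → k ≤ n + 1 → α n j ≤ α n k := by
    intro n j k hjk hk
    rw [hα, hα]
    gcongr
    · exact (hl_pos n).le
    · exact hmonok n j k hjk hk
  -- integral identities
  have hIcc : ∀ n : ℕ, Finset.Icc 1 n = Finset.Ioc 0 n := fun n => Finset.Icc_add_one_left_eq_Ioc 0 n
  have hInt : ∀ n : ℕ, ∫ x, f x ∂(empiricalMeasure α n)
      = ((n:ℝ))⁻¹ * ∑ k ∈ Finset.Ioc 0 n, f (α n k) := by
    intro n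
    rw [empiricalMeasure, integral_smul_measure,
      integral_finset_sum_measure (fun i _ => f.integrable _)]
    simp only [integral_dirac, hIcc]
    rw [ENNReal.toReal_inv, smul_eq_mul]
    norm_num
  have hpbar0 : 0 ≤ pbar := by
    apply ge_of_tendsto' hcesaro
    intro n
    exact div_nonneg (Finset.sum_nonneg fun m _ => (hp m).1) (Nat.cast_nonneg _)
  have hpbar1 : pbar ≤ 1 := by
    apply le_of_tendsto' hcesaro
    intro n
    rcases Nat.eq_zero_or_pos n with rfl | hn
    · simp
    · apply div_le_one_of_le₀ ?_ (Nat.cast_nonneg _)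
      calc ∑ k ∈ Finset.Icc 1 n, p k ≤ ∑ k ∈ Finset.Icc 1 n, 1 :=
            Finset.sum_le_sum fun m _ => (hp m).2
        _ = (n:ℝ) := by simp
  have hRHS : (∫ x, f x ∂(ENNReal.ofReal pbar • Measure.dirac (0:ℝ) +
      ENNReal.ofReal (1 - pbar) • Measure.dirac (1:ℝ)))
      = pbar * f 0 + (1 - pbar) * f 1 := by
    rw [integral_add_measure ((f.integrable _).smul_measure ENNReal.ofReal_ne_top)
      ((f.integrable _).smul_measure ENNReal.ofReal_ne_top),
      integral_smul_measure, integral_smul_measure, integral_dirac, integral_dirac,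
      ENNReal.toReal_ofReal hpbar0, ENNReal.toReal_ofReal (by linarith), smul_eq_mul, smul_eq_mul]
  -- Cesàro variants
  have hces_Ioc : Tendsto (fun n : ℕ => (∑ m ∈ Finset.Ioc 0 n, p m)/n) atTop (nhds pbar) := by
    apply hcesaro.congr
    intro n
    rw [hIcc]
  have hces_range : Tendsto (fun n : ℕ => (∑ m ∈ Finset.range n, p (m+1))/n) atTop (nhds pbar) := by
    apply hces_Ioc.congr
    intro n
    rw [sum_Ioc_shift]
  -- slow variation facts
  have hslow' : ∀ θ : ℝ, 0 < θ → θ ≤ 1 →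
      Tendsto (fun n : ℕ => l (⌈θ * (n:ℝ)⌉₊) / l n) atTop (nhds 1) :=
    fun θ h0 h1 => slow_l l L hL_mono hL_interp hL_slow hl_pos hl_mono θ h0 h1
  have heps := eps_to_zero l L hL_mono hL_interp hL_slow hl_pos hl_mono
  -- mean convergence
  have hkey := frag_sum_bound p a hp hrec' hanti' hmono' (frag_sum p a hrec') l hl
  have hmean0 := frag_mean_abstract (fun n => ∑ j ∈ Finset.range n, (a n (j+1) - a n 0))
    (fun _ => 0) (fun m => p (m+1)) l pbar hl_pos hkey heps hces_range
  have hmean : Tendsto (fun n : ℕ => (∑ k ∈ Finset.Ioc 0 n, α n k)/(n:ℝ)) atTop (nhds (1 - pbar)) := by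
    apply hmean0.congr
    intro n
    rw [sum_Ioc_shift]
    have e1 : ∑ j ∈ Finset.range n, α n (j+1)
        = (∑ j ∈ Finset.range n, (a n (j+1) - a n 0)) / l n := by
      rw [Finset.sum_div]
      exact Finset.sum_congr rfl fun j _ => hα n (j+1)
    rw [e1, div_div, mul_comm (l n) (n:ℝ)]
  -- tail estimate
  have htail := frag_tail p a hp hrec' hanti' hmono' ha01
    (fun β c hβ hc n₀ N hc' => frag_barrier p a hp hrec' hanti' hmono' ha01 β c hβ hc n₀ N hc')
    (fun β s => frag_prod_le p hp β s) l hl hl_pos hl_mono pbar hpbar1 hces_Ioc hslow' α hα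
  -- final assembly
  rw [hRHS]
  apply Tendsto.congr (fun n => (hInt n).symm)
  rw [Metric.tendsto_atTop]
  intro E hE
  set F := ‖f‖ with hF
  have hF0 : 0 ≤ F := norm_nonneg f
  have hFx : ∀ x : ℝ, |f x| ≤ F := fun x => by
    have := f.norm_coe_le_norm x
    simpa [Real.norm_eq_abs] using this
  obtain ⟨δ₀, hδ₀pos, hδ₀⟩ := Metric.continuousAt_iff.mp
    (f.continuous.continuousAt (x := (0:ℝ))) (E/4) (by positivity)
  obtain ⟨δ₁, hδ₁pos, hδ₁⟩ := Metric.continuousAt_iff.mp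
    (f.continuous.continuousAt (x := (1:ℝ))) (E/4) (by positivity)
  set δ := min δ₀ δ₁ with hδdef
  have hδpos : 0 < δ := lt_min hδ₀pos hδ₁pos
  set Cδ : ℝ := 2*F/δ + 1 with hCδ
  have hCδpos : 0 < Cδ := by positivity
  have h2Fδ : 2*F/δ ≤ Cδ := by rw [hCδ]; linarith
  set ε : ℝ := min (1/2) (E/(32*(Cδ + F + 1))) with hεdef
  have hε0 : 0 < ε := lt_min (by norm_num) (by positivity)
  have hεhalf : ε ≤ 1/2 := min_le_left _ _
  have hεsmall2 : ε * (16*(Cδ + F + 1)) ≤ E/2 := by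
    have h1 : ε ≤ E/(32*(Cδ + F + 1)) := min_le_right _ _
    have h2 : (0:ℝ) < 16*(Cδ + F + 1) := by positivity
    have h3 : (0:ℝ) < 32*(Cδ + F + 1) := by positivity
    calc ε * (16*(Cδ + F + 1)) ≤ E/(32*(Cδ + F + 1)) * (16*(Cδ + F + 1)) :=
          mul_le_mul_of_nonneg_right h1 h2.le
      _ = E/2 := by
          rw [div_mul_eq_mul_div, div_eq_div_iff h3.ne' (by norm_num : (2:ℝ) ≠ 0)]
          ring
  obtain ⟨N₁, hN₁⟩ := Metric.tendsto_atTop.mp hmean ε hε0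
  obtain ⟨N₂, hN₂⟩ := Metric.tendsto_atTop.mp (htail ε hε0 hεhalf) ε hε0
  obtain ⟨N₃, hN₃r⟩ := exists_nat_gt (1/ε)
  refine ⟨(max (max N₁ N₂) N₃) + 1, fun n hn => ?_⟩
  have hn1 : 1 ≤ n := by omega
  have hnN₁ : N₁ ≤ n := by
    have h := le_max_left N₁ N₂
    have h2 := le_max_left (max N₁ N₂) N₃
    omega
  have hnN₂ : N₂ ≤ n := by
    have h := le_max_right N₁ N₂
    have h2 := le_max_left (max N₁ N₂) N₃
    omega
  have hnN₃ : N₃ ≤ n := by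
    have h2 := le_max_right (max N₁ N₂) N₃
    omega
  have hnR : (0:ℝ) < n := by exact_mod_cast hn1
  have hinv : 1 ≤ ε * n := by
    have hN₃n : (1/ε : ℝ) < n := by
      refine lt_of_lt_of_le hN₃r ?_
      exact_mod_cast hnN₃
    rw [div_lt_iff₀ hε0] at hN₃n
    linarith
  set K : ℕ := ⌊(pbar - ε) * (n:ℝ)⌋₊ with hKdef
  have hKn : K ≤ n := by
    have h1 : (pbar - ε) * (n:ℝ) ≤ (n:ℝ) := by nlinarith [hnR.le]
    calc K ≤ ⌊(n:ℝ)⌋₊ := Nat.floor_le_floor h1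
      _ = n := Nat.floor_natCast n
  have hKnR : (K:ℝ) ≤ (n:ℝ) := by exact_mod_cast hKn
  have hKup : (K:ℝ) ≤ pbar * n := by
    by_cases h : 0 ≤ (pbar - ε) * (n:ℝ)
    · calc (K:ℝ) ≤ (pbar - ε) * n := Nat.floor_le h
        _ ≤ pbar * n := by nlinarith
    · push_neg at h
      rw [hKdef, Nat.floor_of_nonpos h.le]
      have : (0:ℝ) ≤ pbar * n := mul_nonneg hpbar0 hnR.le
      simpa using this
  have hKlow : (pbar - ε) * (n:ℝ) - 1 ≤ K := by
    have := Nat.lt_floor_add_one ((pbar - ε) * (n:ℝ))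
    rw [hKdef]
    push_cast
    linarith
  have hαK : α n K ≤ ε := by
    have hd := hN₂ n hnN₂
    rw [Real.dist_eq, sub_zero] at hd
    have h0 := hα0 n K (by omega)
    rw [abs_of_nonneg h0] at hd
    linarith
  have hmeann := hN₁ n hnN₁
  rw [Real.dist_eq] at hmeann
  have hmean_low : (1 - pbar - ε) * n ≤ ∑ k ∈ Finset.Ioc 0 n, α n k := by
    have h := abs_lt.mp hmeann
    have h2 : (1 - pbar) - ε ≤ (∑ k ∈ Finset.Ioc 0 n, α n k)/n := by linarith [h.1]
    calc (1 - pbar - ε) * n ≤ ((∑ k ∈ Finset.Ioc 0 n, α n k)/n) * n :=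
          mul_le_mul_of_nonneg_right h2 hnR.le
      _ = ∑ k ∈ Finset.Ioc 0 n, α n k := div_mul_cancel₀ _ hnR.ne'
  have hlowsum : ∑ k ∈ Finset.Ioc 0 K, α n k ≤ (K:ℝ) * ε := by
    calc ∑ k ∈ Finset.Ioc 0 K, α n k ≤ ∑ _k ∈ Finset.Ioc 0 K, ε := by
          apply Finset.sum_le_sum
          intro k hk
          have hkK := (Finset.mem_Ioc.mp hk).2
          exact le_trans (hαmono n k K (by omega) (by omega)) hαK
      _ = (K:ℝ) * ε := by rw [Finset.sum_const, Nat.card_Ioc]; simp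
  have hlowsum0 : 0 ≤ ∑ k ∈ Finset.Ioc 0 K, α n k :=
    Finset.sum_nonneg fun k hk => hα0 n k (by
      have := (Finset.mem_Ioc.mp hk).2; omega)
  have hfl : ∀ k ∈ Finset.Ioc 0 K, |f (α n k) - f 0| ≤ E/4 + (2*F/δ) * α n k := by
    intro k hk
    have hk2 := (Finset.mem_Ioc.mp hk).2
    have h0 := hα0 n k (by omega)
    have hE4 : (0:ℝ) ≤ E/4 := by positivity
    by_cases hless : α n k < δ
    · have hd : dist (α n k) 0 < δ₀ := by
        rw [Real.dist_eq, sub_zero, abs_of_nonneg h0]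
        exact lt_of_lt_of_le hless (min_le_left _ _)
      have hfd := le_of_lt (hδ₀ hd)
      rw [Real.dist_eq] at hfd
      have hterm : 0 ≤ (2*F/δ) * α n k := by positivity
      linarith
    · push_neg at hless
      have h1 : |f (α n k) - f 0| ≤ 2*F := by
        calc |f (α n k) - f 0| ≤ |f (α n k)| + |f 0| := abs_sub _ _
          _ ≤ 2*F := by linarith [hFx (α n k), hFx 0]
      have h2 : 2*F ≤ (2*F/δ) * α n k := by
        calc 2*F = (2*F/δ) * δ := by field_simp
          _ ≤ (2*F/δ) * α n k := mul_le_mul_of_nonneg_left hless (by positivity)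
      linarith
  have hfh : ∀ k ∈ Finset.Ioc K n, |f (α n k) - f 1| ≤ E/4 + (2*F/δ) * (1 - α n k) := by
    intro k hk
    have hk2 := (Finset.mem_Ioc.mp hk).2
    have h0 := hα0 n k (by omega)
    have h1b := hα1 n k (by omega)
    have hE4 : (0:ℝ) ≤ E/4 := by positivity
    by_cases hless : 1 - α n k < δ
    · have hd : dist (α n k) 1 < δ₁ := by
        rw [Real.dist_eq, abs_sub_comm, abs_of_nonneg (by linarith)]
        exact lt_of_lt_of_le hless (min_le_right _ _)
      have hfd := le_of_lt (hδ₁ hd)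
      rw [Real.dist_eq] at hfd
      have hterm : 0 ≤ (2*F/δ) * (1 - α n k) := by
        apply mul_nonneg (by positivity)
        linarith
      linarith
    · push_neg at hless
      have h1 : |f (α n k) - f 1| ≤ 2*F := by
        calc |f (α n k) - f 1| ≤ |f (α n k)| + |f 1| := abs_sub _ _
          _ ≤ 2*F := by linarith [hFx (α n k), hFx 1]
      have h2 : 2*F ≤ (2*F/δ) * (1 - α n k) := by
        calc 2*F = (2*F/δ) * δ := by field_simp
          _ ≤ (2*F/δ) * (1 - α n k) := mul_le_mul_of_nonneg_left hless (by positivity)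
      linarith
  have hhighsum : ∑ k ∈ Finset.Ioc K n, (1 - α n k) ≤ 4 * ε * n := by
    have hsplit := Finset.sum_Ioc_consecutive (fun k => α n k) (Nat.zero_le K) hKn
    have e1 : ∑ k ∈ Finset.Ioc K n, (1 - α n k)
        = ((n - K : ℕ):ℝ) - ∑ k ∈ Finset.Ioc K n, α n k := by
      rw [Finset.sum_sub_distrib, Finset.sum_const, Nat.card_Ioc]; simp
    have e2 : ((n - K:ℕ):ℝ) = (n:ℝ) - K := by
      rw [Nat.cast_sub hKn]
    have h3 : ∑ k ∈ Finset.Ioc K n, α n k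
        = (∑ k ∈ Finset.Ioc 0 n, α n k) - ∑ k ∈ Finset.Ioc 0 K, α n k := by
      linarith [hsplit]
    rw [e1, e2, h3]
    have hKε : (K:ℝ) * ε ≤ (n:ℝ) * ε := mul_le_mul_of_nonneg_right hKnR hε0.le
    nlinarith [hmean_low, hlowsum, hKlow, hKε, hinv]
  -- combine the two blocks
  have hsumsplit : (∑ k ∈ Finset.Ioc 0 n, f (α n k))
      = (∑ k ∈ Finset.Ioc 0 K, f (α n k)) + ∑ k ∈ Finset.Ioc K n, f (α n k) :=
    (Finset.sum_Ioc_consecutive (fun k => f (α n k)) (Nat.zero_le K) hKn).symm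
  have hblock1 : |(∑ k ∈ Finset.Ioc 0 K, f (α n k)) - (K:ℝ) * f 0|
      ≤ (K:ℝ) * (E/4) + (2*F/δ) * ((K:ℝ) * ε) := by
    have e1 : (∑ k ∈ Finset.Ioc 0 K, f (α n k)) - (K:ℝ) * f 0
        = ∑ k ∈ Finset.Ioc 0 K, (f (α n k) - f 0) := by
      rw [Finset.sum_sub_distrib, Finset.sum_const, Nat.card_Ioc]; simp
    rw [e1]
    calc |∑ k ∈ Finset.Ioc 0 K, (f (α n k) - f 0)|
        ≤ ∑ k ∈ Finset.Ioc 0 K, |f (α n k) - f 0| := Finset.abs_sum_le_sum_abs _ _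
      _ ≤ ∑ k ∈ Finset.Ioc 0 K, (E/4 + (2*F/δ) * α n k) := Finset.sum_le_sum hfl
      _ = (K:ℝ) * (E/4) + (2*F/δ) * ∑ k ∈ Finset.Ioc 0 K, α n k := by
          rw [Finset.sum_add_distrib, Finset.sum_const, Nat.card_Ioc, ← Finset.mul_sum]
          simp
      _ ≤ (K:ℝ) * (E/4) + (2*F/δ) * ((K:ℝ) * ε) := by
          have := mul_le_mul_of_nonneg_left hlowsum (by positivity : (0:ℝ) ≤ 2*F/δ)
          linarith
  have hblock2 : |(∑ k ∈ Finset.Ioc K n, f (α n k)) - ((n:ℝ) - K) * f 1|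
      ≤ ((n:ℝ) - K) * (E/4) + (2*F/δ) * (4 * ε * n) := by
    have e1 : (∑ k ∈ Finset.Ioc K n, f (α n k)) - ((n:ℝ) - K) * f 1
        = ∑ k ∈ Finset.Ioc K n, (f (α n k) - f 1) := by
      rw [Finset.sum_sub_distrib, Finset.sum_const, Nat.card_Ioc]
      simp [Nat.cast_sub hKn]
    rw [e1]
    calc |∑ k ∈ Finset.Ioc K n, (f (α n k) - f 1)|
        ≤ ∑ k ∈ Finset.Ioc K n, |f (α n k) - f 1| := Finset.abs_sum_le_sum_abs _ _
      _ ≤ ∑ k ∈ Finset.Ioc K n, (E/4 + (2*F/δ) * (1 - α n k)) := Finset.sum_le_sum hfh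
      _ = ((n:ℝ) - K) * (E/4) + (2*F/δ) * ∑ k ∈ Finset.Ioc K n, (1 - α n k) := by
          rw [Finset.sum_add_distrib, Finset.sum_const, Nat.card_Ioc, ← Finset.mul_sum]
          simp [Nat.cast_sub hKn]
      _ ≤ ((n:ℝ) - K) * (E/4) + (2*F/δ) * (4 * ε * n) := by
          have := mul_le_mul_of_nonneg_left hhighsum (by positivity : (0:ℝ) ≤ 2*F/δ)
          linarith
  have hclaim2 : |((K:ℝ) * f 0 + ((n:ℝ) - K) * f 1)
      - (n:ℝ) * (pbar * f 0 + (1 - pbar) * f 1)| ≤ (ε * n + 1) * (2*F) := by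
    have e1 : ((K:ℝ) * f 0 + ((n:ℝ) - K) * f 1)
        - (n:ℝ) * (pbar * f 0 + (1 - pbar) * f 1)
        = ((K:ℝ) - pbar * n) * (f 0 - f 1) := by ring
    rw [e1, abs_mul]
    have h1 : |(K:ℝ) - pbar * n| ≤ ε * n + 1 := by
      rw [abs_le]
      constructor
      · nlinarith [hKlow]
      · nlinarith [hKup, hinv]
    have h2 : |f 0 - f 1| ≤ 2*F := by
      calc |f 0 - f 1| ≤ |f 0| + |f 1| := abs_sub _ _
        _ ≤ 2*F := by linarith [hFx 0, hFx 1]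
    have := mul_le_mul h1 h2 (abs_nonneg _) (by nlinarith [hinv])
    linarith
  -- put everything together
  rw [Real.dist_eq]
  have hfinal : |(n:ℝ)⁻¹ * (∑ k ∈ Finset.Ioc 0 n, f (α n k))
      - (pbar * f 0 + (1 - pbar) * f 1)|
      = |(∑ k ∈ Finset.Ioc 0 n, f (α n k))
        - (n:ℝ) * (pbar * f 0 + (1 - pbar) * f 1)| / n := by
    rw [← abs_of_pos hnR, ← abs_div]
    congr 1
    field_simp
    rw [abs_of_pos hnR]; ring
  rw [hfinal]
  rw [div_lt_iff₀ hnR]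
  have htri : |(∑ k ∈ Finset.Ioc 0 n, f (α n k))
      - (n:ℝ) * (pbar * f 0 + (1 - pbar) * f 1)|
      ≤ (K:ℝ) * (E/4) + (2*F/δ) * ((K:ℝ) * ε)
        + (((n:ℝ) - K) * (E/4) + (2*F/δ) * (4 * ε * n))
        + (ε * n + 1) * (2*F) := by
    calc |(∑ k ∈ Finset.Ioc 0 n, f (α n k)) - (n:ℝ) * (pbar * f 0 + (1 - pbar) * f 1)|
        ≤ |(∑ k ∈ Finset.Ioc 0 K, f (α n k)) - (K:ℝ) * f 0|
          + |(∑ k ∈ Finset.Ioc K n, f (α n k)) - ((n:ℝ) - K) * f 1|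
          + |((K:ℝ) * f 0 + ((n:ℝ) - K) * f 1)
            - (n:ℝ) * (pbar * f 0 + (1 - pbar) * f 1)| := by
          rw [hsumsplit]
          have habc := abs_add_le ((∑ k ∈ Finset.Ioc 0 K, f (α n k)) - (K:ℝ) * f 0
              + ((∑ k ∈ Finset.Ioc K n, f (α n k)) - ((n:ℝ) - K) * f 1))
            (((K:ℝ) * f 0 + ((n:ℝ) - K) * f 1)
              - (n:ℝ) * (pbar * f 0 + (1 - pbar) * f 1))
          have habc2 := abs_add_le ((∑ k ∈ Finset.Ioc 0 K, f (α n k)) - (K:ℝ) * f 0)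
            ((∑ k ∈ Finset.Ioc K n, f (α n k)) - ((n:ℝ) - K) * f 1)
          have e : (∑ k ∈ Finset.Ioc 0 K, f (α n k)) + (∑ k ∈ Finset.Ioc K n, f (α n k))
              - (n:ℝ) * (pbar * f 0 + (1 - pbar) * f 1)
              = ((∑ k ∈ Finset.Ioc 0 K, f (α n k)) - (K:ℝ) * f 0
                + ((∑ k ∈ Finset.Ioc K n, f (α n k)) - ((n:ℝ) - K) * f 1))
                + (((K:ℝ) * f 0 + ((n:ℝ) - K) * f 1)
                  - (n:ℝ) * (pbar * f 0 + (1 - pbar) * f 1)) := by ring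
          rw [e]
          linarith
      _ ≤ _ := by linarith [hblock1, hblock2, hclaim2]
  refine lt_of_le_of_lt htri ?_
  -- final arithmetic
  have hKE : (K:ℝ) * (E/4) + ((n:ℝ) - K) * (E/4) = (n:ℝ) * (E/4) := by ring
  have hKεn : (K:ℝ) * ε ≤ (n:ℝ) * ε := mul_le_mul_of_nonneg_right hKnR hε0.le
  have hFδpos : (0:ℝ) ≤ 2*F/δ := by positivity
  have hb1 : (2*F/δ) * ((K:ℝ) * ε) ≤ Cδ * (ε * n) := by
    calc (2*F/δ) * ((K:ℝ) * ε) ≤ (2*F/δ) * ((n:ℝ) * ε) :=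
          mul_le_mul_of_nonneg_left hKεn hFδpos
      _ ≤ Cδ * ((n:ℝ) * ε) := mul_le_mul_of_nonneg_right h2Fδ (by positivity)
      _ = Cδ * (ε * n) := by ring
  have hb2 : (2*F/δ) * (4 * ε * n) ≤ Cδ * (4 * ε * n) :=
    mul_le_mul_of_nonneg_right h2Fδ (by positivity)
  have hb3 : (ε * n + 1) * (2*F) ≤ 4 * ε * n * F := by
    have h := mul_le_mul_of_nonneg_right hinv (by positivity : (0:ℝ) ≤ 2*F)
    ring_nf
    ring_nf at h
    linarith
  have hsum16 : Cδ * (ε * n) + Cδ * (4 * ε * n) + 4 * ε * n * F ≤ ε * n * (16*(Cδ + F + 1)) := by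
    have p0 : (0:ℝ) ≤ ε * n := mul_nonneg hε0.le hnR.le
    have p1 : (0:ℝ) ≤ Cδ * (ε * n) := mul_nonneg hCδpos.le p0
    have p2 : (0:ℝ) ≤ F * (ε * n) := mul_nonneg hF0 p0
    ring_nf
    ring_nf at p1 p2
    linarith
  have hεE : ε * n * (16*(Cδ + F + 1)) ≤ E/2 * n := by
    calc ε * n * (16*(Cδ + F + 1)) = (ε * (16*(Cδ + F + 1))) * n := by ring
      _ ≤ E/2 * n := mul_le_mul_of_nonneg_right hεsmall2 hnR.le
  calc (K:ℝ) * (E/4) + (2*F/δ) * ((K:ℝ) * ε)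
        + (((n:ℝ) - K) * (E/4) + (2*F/δ) * (4 * ε * n))
        + (ε * n + 1) * (2*F)
      ≤ (n:ℝ) * (E/4) + (Cδ * (ε * n) + Cδ * (4 * ε * n) + 4 * ε * n * F) := by linarith
    _ ≤ (n:ℝ) * (E/4) + E/2 * n := by linarith [le_trans hsum16 hεE]
    _ < E * n := by
        have := mul_pos hE hnR
        linarith
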